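/- For a prime p, a positive integer α, and a natural number n with n ≤ p^α − 1, the p-adic valuation of ∑_{x=0}^{p^α−1} C(x, n) equals α − ord_p(n+1), where ord_p denotes the p-adic valuation. -/

import Mathlib

theorem stmt_1 (p : ℕ) (hp : p.Prime) (α : ℕ) (hα : 0 < α) (n : ℕ)
    (hn : n ≤ p ^ α - 1) :
    padicValNat p (∑ x ∈ Finset.range (p ^ α), x.choose n)
      = α - padicValNat p (n + 1) := by
  haveI : Fact p.Prime := ⟨hp⟩
  have hppos : 0 < p ^ α := Nat.pow_pos hp.pos
  have hn1 : n + 1 ≤ p ^ α := by omega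
  have hsum : (∑ x ∈ Finset.range (p ^ α), x.choose n) = (p ^ α).choose (n + 1) := by
    have hsub : Finset.Icc n (p ^ α - 1) ⊆ Finset.range (p ^ α) := by
      intro x hx
      simp only [Finset.mem_Icc] at hx
      simp only [Finset.mem_range]
      omega
    rw [← Finset.sum_subset hsub (fun x hx hx' => by
      simp only [Finset.mem_range] at hx
      simp only [Finset.mem_Icc, not_and, not_le] at hx'
      exact Nat.choose_eq_zero_of_lt (by omega))]
    rw [Nat.sum_Icc_choose]
    congr 1
    omega
  rw [hsum]
  have hm : multiplicity p (n + 1) = padicValNat p (n + 1) := by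
    have hfin : FiniteMultiplicity p (n + 1) :=
      Nat.finiteMultiplicity_iff.2 ⟨hp.ne_one, Nat.succ_pos n⟩
    have := padicValNat_eq_emultiplicity (p := p) (n := n + 1) (Nat.succ_ne_zero n)
    rw [hfin.emultiplicity_eq_multiplicity] at this
    exact_mod_cast this.symm
  have hkey := Nat.Prime.emultiplicity_choose_prime_pow (p := p) (n := α) (k := n + 1)
    hp hn1 (Nat.succ_ne_zero n)
  rw [← padicValNat_eq_emultiplicity (Nat.choose_pos hn1).ne'] at hkey
  rw [hm] at hkey
  exact_mod_cast hkey
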